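/- Let p and q be monic real polynomials of degrees n and n−1 respectively, both with all roots real and simple, such that the roots of q interlace the roots of p, and suppose r is defined by p(λ) = (λ − c) q(λ) − b² r(λ) with b ≠ 0 and r monic of degree n−2. Then the values of r at consecutive zeros of q alternate in sign, and hence r has n−2 real roots interlacing the roots of q. -/
import Mathlib

open Polynomial

lemma exists_root_of_mul_neg (r : ℝ[X]) (a b : ℝ) (hab : a < b)
    (h : r.eval a * r.eval b < 0) : ∃ x ∈ Set.Ioo a b, r.eval x = 0 := by
  have hc : ContinuousOn (fun x => r.eval x) (Set.Icc a b) :=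
    (Polynomial.continuous r).continuousOn
  rcases mul_neg_iff.mp h with ⟨ha, hb⟩ | ⟨ha, hb⟩
  · have : (0:ℝ) ∈ Set.Ioo (r.eval b) (r.eval a) := ⟨hb, ha⟩
    have := intermediate_value_Ioo' hab.le hc this
    obtain ⟨x, hx, hx0⟩ := this
    exact ⟨x, hx, hx0⟩
  · have : (0:ℝ) ∈ Set.Ioo (r.eval a) (r.eval b) := ⟨ha, hb⟩
    obtain ⟨x, hx, hx0⟩ := intermediate_value_Ioo hab.le hc this
    exact ⟨x, hx, hx0⟩

theorem stmt_7 (n : ℕ) (hn : 2 ≤ n)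
    (ρ : Fin n → ℝ) (hρ : StrictMono ρ)
    (μ : Fin (n - 1) → ℝ) (hμ : StrictMono μ)
    (p q r : ℝ[X])
    (hp : p = ∏ i, (X - C (ρ i)))
    (hq : q = ∏ i, (X - C (μ i)))
    (hint : ∀ i : Fin (n - 1),
      ρ (Fin.cast (by omega) i.castSucc) < μ i ∧
      μ i < ρ (Fin.cast (by omega) i.succ))
    (c b : ℝ) (hb : b ≠ 0)
    (hr : p = (X - C c) * q - C (b ^ 2) * r)
    (hrmonic : r.Monic) (hrdeg : r.natDegree = n - 2) :
    (∀ i : Fin (n - 2),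
      r.eval (μ (Fin.cast (by omega) i.castSucc)) *
        r.eval (μ (Fin.cast (by omega) i.succ)) < 0) ∧
    ∃ ν : Fin (n - 2) → ℝ, StrictMono ν ∧ (∀ i, r.IsRoot (ν i)) ∧
      ∀ i : Fin (n - 2),
        μ (Fin.cast (by omega) i.castSucc) < ν i ∧
        ν i < μ (Fin.cast (by omega) i.succ) := by
  -- comparisons between ρ and μ
  have hcomp1 : ∀ (k : Fin (n-1)) (j : Fin n), j.val ≤ k.val → ρ j < μ k := by
    intro k j hjk
    have h1 : ρ j ≤ ρ (Fin.cast (by omega) k.castSucc) := by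
      apply hρ.monotone
      simp [Fin.le_def, hjk]
    exact lt_of_le_of_lt h1 (hint k).1
  have hcomp2 : ∀ (k : Fin (n-1)) (j : Fin n), k.val < j.val → μ k < ρ j := by
    intro k j hjk
    have h1 : ρ (Fin.cast (by omega) k.succ) ≤ ρ j := by
      apply hρ.monotone
      simp [Fin.le_def]; omega
    exact lt_of_lt_of_le (hint k).2 h1
  -- q vanishes at μ
  have hqz : ∀ k : Fin (n-1), q.eval (μ k) = 0 := by
    intro k
    rw [hq, eval_prod]
    apply Finset.prod_eq_zero (Finset.mem_univ k)
    simp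
  -- b^2 r(μ k) = - p(μ k)
  have hs : ∀ k : Fin (n-1), b^2 * r.eval (μ k) = - p.eval (μ k) := by
    intro k
    have := congrArg (eval (μ k)) hr
    simp [hqz k] at this
    linarith
  have peval : ∀ x, p.eval x = ∏ j, (x - ρ j) := by
    intro x; rw [hp, eval_prod]; simp
  -- key sign lemma
  have key : ∀ i : Fin (n-2),
      p.eval (μ (Fin.cast (by omega) i.castSucc)) *
        p.eval (μ (Fin.cast (by omega) i.succ)) < 0 := by
    intro i
    set a : Fin (n-1) := Fin.cast (by omega) i.castSucc with ha
    set b' : Fin (n-1) := Fin.cast (by omega) i.succ with hb'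
    have hav : a.val = i.val := rfl
    have hbv : b'.val = i.val + 1 := rfl
    have hin : i.val + 1 < n := by omega
    set k : Fin n := ⟨i.val + 1, hin⟩ with hk
    rw [peval, peval, ← Finset.prod_mul_distrib]
    rw [← Finset.mul_prod_erase Finset.univ _ (Finset.mem_univ k)]
    apply mul_neg_of_neg_of_pos
    · apply mul_neg_of_neg_of_pos
      · have := hcomp2 a k (by simp [hav, hk])
        linarith
      · have := hcomp1 b' k (by simp [hbv, hk])
        linarith
    · apply Finset.prod_pos
      intro j hj
      have hjk : j ≠ k := (Finset.mem_erase.mp hj).1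
      rcases lt_or_ge j.val (i.val + 1) with h | h
      · have h1 := hcomp1 a j (by omega)
        have h2 := hcomp1 b' j (by omega)
        exact mul_pos (by linarith) (by linarith)
      · have h' : i.val + 1 < j.val := by
          rcases lt_or_eq_of_le h with h | h
          · exact h
          · exact absurd (Fin.ext h.symm) hjk
        have h1 := hcomp2 a j (by omega)
        have h2 := hcomp2 b' j (by omega)
        exact mul_pos_of_neg_of_neg (by linarith) (by linarith)
  have hb2 : (0:ℝ) < b^2 := by positivity
  have rkey : ∀ i : Fin (n-2),
      r.eval (μ (Fin.cast (by omega) i.castSucc)) *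
        r.eval (μ (Fin.cast (by omega) i.succ)) < 0 := by
    intro i
    have h1 := hs (Fin.cast (by omega) i.castSucc)
    have h2 := hs (Fin.cast (by omega) i.succ)
    have h3 := key i
    have h4 := congrArg₂ (· * ·) h1 h2
    simp only [neg_mul_neg] at h4
    nlinarith [h4, mul_pos hb2 hb2]
  refine ⟨rkey, ?_⟩
  have hmono : ∀ i : Fin (n-2),
      μ (Fin.cast (by omega) i.castSucc) < μ (Fin.cast (by omega) i.succ) := by
    intro i
    apply hμ
    simp [Fin.lt_def]
  have hex : ∀ i : Fin (n-2), ∃ x, x ∈ Set.Ioo (μ (Fin.cast (by omega) i.castSucc))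
      (μ (Fin.cast (by omega) i.succ)) ∧ r.eval x = 0 := by
    intro i
    obtain ⟨x, hx, hx0⟩ := exists_root_of_mul_neg r _ _ (hmono i) (rkey i)
    exact ⟨x, hx, hx0⟩
  choose ν hν1 hν2 using hex
  refine ⟨ν, ?_, fun i => hν2 i, fun i => ⟨(hν1 i).1, (hν1 i).2⟩⟩
  intro i j hij
  have h1 : ν i < μ (Fin.cast (by omega) i.succ) := (hν1 i).2
  have h2 : μ (Fin.cast (by omega) j.castSucc) < ν j := (hν1 j).1
  have h3 : μ (Fin.cast (by omega) i.succ) ≤ μ (Fin.cast (by omega) j.castSucc) := by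
    apply hμ.monotone
    simp [Fin.le_def]
    omega
  linarith
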